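/- If a ≤ω-semigroup S (a partial infinitary semigroup in which all products over nonempty well-ordered index sets of order type at most ω are defined) has a neutral element e for the binary operation with ∏_{n∈ω} e = e, then no element a ≠ e has a two-sided inverse: there is no b with a*b = e = b*a. -/
import Mathlib


/-- A partial infinitary semigroup: a type `S` with a partial product
(`none` = undefined) on sequences indexed by linearly ordered types, satisfying
(U) singleton products are defined and equal the unique entry, and
(N) generalized associativity under surjective order-preserving maps. -/
structure PartialInfSemigroup (S : Type) : Type 1 where
  prod : ∀ (I : Type) [LinearOrder I], (I → S) → Option S
  unit : ∀ (I : Type) [LinearOrder I] (a : I → S) (i : I),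
      (∀ j, j = i) → prod I a = some (a i)
  assoc : ∀ (I J : Type) [LinearOrder I] [LinearOrder J] (a : I → S) (π : I → J),
      Function.Surjective π → Monotone π → ∀ s : S, prod I a = some s →
      ∃ p : J → S,
        (∀ j : J, prod {i : I // π i = j} (fun i => a i.1) = some (p j)) ∧
        prod J p = some s

lemma transferPIS {S : Type} (P : PartialInfSemigroup S)
    {I J : Type} [LinearOrder I] [LinearOrder J] (f : I ≃o J)
    (c : I → S) (s : S) (h : P.prod I c = some s) :
    P.prod J (c ∘ f.symm) = some s := by
  obtain ⟨p, hp, hps⟩ := P.assoc I J c f f.surjective f.monotone s h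
  have hpe : p = c ∘ f.symm := by
    funext j
    have huniq : ∀ i : {i : I // f i = j}, i = ⟨f.symm j, by simp⟩ := by
      rintro ⟨i, hi⟩
      apply Subtype.ext
      simpa using congrArg f.symm hi
    have h1 := P.unit {i : I // f i = j} (fun i => c i.1) ⟨f.symm j, by simp⟩ huniq
    have h2 := hp j
    rw [h1] at h2
    exact (Option.some_inj.mp h2).symm
  rwa [hpe] at hps

lemma pairProd {S : Type} (P : PartialInfSemigroup S)
    {I : Type} [LinearOrder I] (i0 i1 : I) (hlt : i0 < i1)
    (hall : ∀ i : I, i = i0 ∨ i = i1) (c : I → S) (s : S)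
    (h : P.prod (Fin 2) ![c i0, c i1] = some s) :
    P.prod I c = some s := by
  have hne : i1 ≠ i0 := (ne_of_lt hlt).symm
  let eqv : Fin 2 ≃ I :=
    { toFun := ![i0, i1]
      invFun := fun i => if i = i0 then 0 else 1
      left_inv := by
        intro k
        fin_cases k <;> simp [hne]
      right_inv := by
        intro i
        rcases hall i with h | h <;> subst h <;> simp [hne] }
  let f : Fin 2 ≃o I :=
    { eqv with
      map_rel_iff' := by
        intro k l
        fin_cases k <;> fin_cases l <;>
          simp [eqv, le_of_lt hlt, not_le.mpr hlt] }
  have ht := transferPIS P f ![c i0, c i1] s h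
  have heq : (![c i0, c i1] ∘ f.symm) = c := by
    funext i
    have hsymm : ∀ k : Fin 2, f.symm (f k) = k := fun k => f.symm_apply_apply k
    rcases hall i with hcase | hcase <;> rw [hcase]
    · have h0 : f 0 = i0 := rfl
      have : f.symm i0 = 0 := by rw [← h0]; exact hsymm 0
      simp [Function.comp, this]
    · have h1 : f 1 = i1 := rfl
      have : f.symm i1 = 1 := by rw [← h1]; exact hsymm 1
      simp [Function.comp, this]
  rwa [heq] at ht

lemma singletonVal {S : Type} (P : PartialInfSemigroup S)
    {I : Type} [LinearOrder I] (c : I → S) (i : I) (huniq : ∀ j : I, j = i)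
    (v : S) (h : P.prod I c = some v) : v = c i := by
  have := P.unit I c i huniq
  rw [this] at h
  exact (Option.some_inj.mp h).symm

/-- In a ≤ω-semigroup (all products over nonempty well-ordered index sets of order
type at most ω are defined) with a neutral element `e` satisfying `∏_{n∈ω} e = e`,
no element distinct from `e` has a two-sided inverse. -/
theorem stmt5 {S : Type} (P : PartialInfSemigroup S)
    (hfin : ∀ (I : Type) [LinearOrder I] [Finite I] [Nonempty I] (x : I → S),
      ∃ s : S, P.prod I x = some s)
    (homega : ∀ x : ℕ → S, ∃ s : S, P.prod ℕ x = some s)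
    (e : S)
    (hneut : ∀ x : S, P.prod (Fin 2) ![x, e] = some x ∧ P.prod (Fin 2) ![e, x] = some x)
    (he : P.prod ℕ (fun _ => e) = some e)
    (a : S) (ha : a ≠ e) (b : S) :
    ¬(P.prod (Fin 2) ![a, b] = some e ∧ P.prod (Fin 2) ![b, a] = some e) := by
  rintro ⟨hab, hba⟩
  set x : ℕ → S := fun n => if n % 2 = 0 then a else b with hx
  obtain ⟨s, hs⟩ := homega x
  -- Grouping 1: pairs (2j, 2j+1), each product = a*b = e, so s = e
  have hs_e : s = e := by
    obtain ⟨p, hp, hps⟩ := P.assoc ℕ ℕ x (fun n => n / 2)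
      (fun j => ⟨2 * j, show 2 * j / 2 = j by omega⟩)
      (fun m n h => Nat.div_le_div_right h) s hs
    have hpe : ∀ j, p j = e := by
      intro j
      have hfib : P.prod {n : ℕ // n / 2 = j} (fun i => x i.1) = some e := by
        apply pairProd P
          (⟨2 * j, show 2 * j / 2 = j by omega⟩ : {n : ℕ // n / 2 = j})
          ⟨2 * j + 1, show (2 * j + 1) / 2 = j by omega⟩
          (Subtype.mk_lt_mk.mpr (by omega))
        · rintro ⟨n, hn⟩
          have : n = 2 * j ∨ n = 2 * j + 1 := by omega
          rcases this with h | h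
          · exact Or.inl (Subtype.ext h)
          · exact Or.inr (Subtype.ext h)
        · have h1 : x (2 * j) = a := by
            have : (2 * j) % 2 = 0 := by omega
            simp [hx, this]
          have h2 : x (2 * j + 1) = b := by
            have : (2 * j + 1) % 2 = 1 := by omega
            simp [hx, this]
          simp only [h1, h2]
          exact hab
      have h3 := hp j
      rw [hfib] at h3
      exact (Option.some_inj.mp h3).symm
    have hpc : p = fun _ => e := funext hpe
    rw [hpc, he] at hps
    exact (Option.some_inj.mp hps).symm
  rw [hs_e] at hs
  clear hs_e
  -- Grouping 2: {0}, then pairs (2j+1, 2j+2); fiber products a, e, e, ...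
  obtain ⟨q, hq, hqs⟩ := P.assoc ℕ ℕ x (fun n => (n + 1) / 2)
    (fun j => ⟨2 * j, show (2 * j + 1) / 2 = j by omega⟩)
    (fun m n h => Nat.div_le_div_right (by omega)) e hs
  have hq0 : q 0 = a := by
    have huniq : ∀ i : {n : ℕ // (n + 1) / 2 = 0}, i = ⟨0, by omega⟩ := by
      rintro ⟨n, hn⟩
      have hn' : (n + 1) / 2 = 0 := hn
      exact Subtype.ext (show n = 0 by omega)
    have h4 := singletonVal P (fun i : {n : ℕ // (n + 1) / 2 = 0} => x i.1) ⟨0, by omega⟩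
      huniq (q 0) (hq 0)
    exact h4.trans (by simp [hx])
  have hqsucc : ∀ j, q (j + 1) = e := by
    intro j
    have hfib : P.prod {n : ℕ // (n + 1) / 2 = j + 1} (fun i => x i.1) = some e := by
      apply pairProd P
        (⟨2 * j + 1, show (2 * j + 1 + 1) / 2 = j + 1 by omega⟩ :
          {n : ℕ // (n + 1) / 2 = j + 1})
        ⟨2 * j + 2, show (2 * j + 2 + 1) / 2 = j + 1 by omega⟩
        (Subtype.mk_lt_mk.mpr (by omega))
      · rintro ⟨n, hn⟩
        have : n = 2 * j + 1 ∨ n = 2 * j + 2 := by omega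
        rcases this with h | h
        · exact Or.inl (Subtype.ext h)
        · exact Or.inr (Subtype.ext h)
      · have h1 : x (2 * j + 1) = b := by
          have : (2 * j + 1) % 2 = 1 := by omega
          simp [hx, this]
        have h2 : x (2 * j + 2) = a := by
          have : (2 * j + 2) % 2 = 0 := by omega
          simp [hx, this]
        simp only [h1, h2]
        exact hba
    have h5 := hq (j + 1)
    rw [hfib] at h5
    exact (Option.some_inj.mp h5).symm
  -- Grouping 3: split q at 0: prod q = a * (e*e*...) = a * e = a, but also = e
  set pi3 : ℕ → Fin 2 := fun n => if n = 0 then 0 else 1 with hpi3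
  have mono3 : Monotone pi3 := by
    intro m n h
    by_cases hm : m = 0
    · have h0 : pi3 m = 0 := by simp [hpi3, hm]
      rw [h0]
      exact Fin.zero_le _
    · have hn : n ≠ 0 := by omega
      simp [hpi3, hm, hn]
  have surj3 : Function.Surjective pi3 := by
    intro k
    fin_cases k
    · exact ⟨0, rfl⟩
    · exact ⟨1, rfl⟩
  obtain ⟨r, hr, hrs⟩ := P.assoc ℕ (Fin 2) q pi3 surj3 mono3 e hqs
  have hr0 : r 0 = a := by
    have huniq : ∀ i : {n : ℕ // pi3 n = 0}, i = ⟨0, rfl⟩ := by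
      rintro ⟨n, hn⟩
      apply Subtype.ext
      by_contra hne
      simp [hpi3, hne] at hn
    have h6 := singletonVal P (fun i : {n : ℕ // pi3 n = 0} => q i.1) ⟨0, rfl⟩ huniq (r 0) (hr 0)
    exact h6.trans hq0
  have hr1 : r 1 = e := by
    let eqv : ℕ ≃ {n : ℕ // pi3 n = 1} :=
      { toFun := fun n => ⟨n + 1, by simp [hpi3]⟩
        invFun := fun i => i.1 - 1
        left_inv := fun n => by simp
        right_inv := by
          rintro ⟨n, hn⟩
          have hne : n ≠ 0 := by
            intro h; simp [hpi3, h] at hn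
          exact Subtype.ext (by simp; omega) }
    let f : ℕ ≃o {n : ℕ // pi3 n = 1} :=
      { eqv with
        map_rel_iff' := by
          intro m n
          simp [eqv, Subtype.mk_le_mk] }
    have ht := transferPIS P f (fun _ => e) e he
    have heq : ((fun _ : ℕ => e) ∘ f.symm) = (fun i : {n : ℕ // pi3 n = 1} => q i.1) := by
      funext i
      obtain ⟨n, hn⟩ := i
      have hne : n ≠ 0 := by intro h; simp [hpi3, h] at hn
      obtain ⟨m, rfl⟩ : ∃ m, n = m + 1 := ⟨n - 1, by omega⟩
      simp [Function.comp, hqsucc m]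
    rw [heq] at ht
    have h7 := hr 1
    rw [ht] at h7
    exact (Option.some_inj.mp h7).symm
  have hre : r = ![a, e] := by
    funext k
    fin_cases k
    · simpa using hr0
    · simpa using hr1
  rw [hre, (hneut a).1] at hrs
  exact ha (Option.some_inj.mp hrs)
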